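/- For every r ≥ 2 and t ≥ 1, if H = (t−1)·K_{1,3(r−1)} is the disjoint union of t−1 stars each with 3(r−1) edges, then there exists f: E(H) → E(H) with f(e) ≠ e and |f(e) ∩ e| ≤ 1 for all e, such that H contains no f-free copy of K_{1,r}; moreover H contains no tK₂. Consequently, if r ≥ 2t+1 and ex(n, {K_{1,r}, tK₂}) = (r−1)(t−1), then h(n, {K_{1,r}, tK₂}) = 3(r−1)(t−1) for all n ≥ (t−1)(3r−2). -/

import Mathlib

open SimpleGraph

variable {V W : Type*}

/-- Two `Sym2` elements (edges) are vertex-disjoint. -/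
def sym2Disjoint (e e' : Sym2 V) : Prop := ∀ v, v ∈ e → v ∉ e'

/-- Edge set of the copy of `G` in `H` given by an (injective) homomorphism. -/
def copyEdges (G : SimpleGraph V) (H : SimpleGraph W) (φ : G →g H) : Set (Sym2 W) :=
  Sym2.map φ '' G.edgeSet

/-- The edge set `E` is `f`-free. -/
def IsFreeSet (f : Sym2 W → Sym2 W) (E : Set (Sym2 W)) : Prop := ∀ e ∈ E, f e ∉ E

/-- `f` is an edge mapping of `H` with `f e ≠ e` (equivalently `|f e ∩ e| ≤ 1`). -/
def IsEdgeMap (H : SimpleGraph W) (f : Sym2 W → Sym2 W) : Prop :=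
  ∀ e ∈ H.edgeSet, f e ∈ H.edgeSet ∧ f e ≠ e

/-- `f` is an edge mapping of `H` with `f e ∩ e = ∅`. -/
def IsDisjEdgeMap (H : SimpleGraph W) (f : Sym2 W → Sym2 W) : Prop :=
  ∀ e ∈ H.edgeSet, f e ∈ H.edgeSet ∧ sym2Disjoint e (f e)

/-- `H` contains a copy of `G` (as a not necessarily induced subgraph). -/
def Contains (G : SimpleGraph V) (H : SimpleGraph W) : Prop :=
  ∃ φ : G →g H, Function.Injective φ

/-- `H` has no `f`-free copy of `G`. -/
def NoFreeCopy (G : SimpleGraph V) (H : SimpleGraph W) (f : Sym2 W → Sym2 W) : Prop :=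
  ∀ φ : G →g H, Function.Injective φ → ¬ IsFreeSet f (copyEdges G H φ)

/-- The Turán number `ex(n, G)`. -/
noncomputable def exNum (n : ℕ) (G : SimpleGraph V) : ℕ :=
  sSup {m | ∃ H : SimpleGraph (Fin n), H.edgeSet.ncard = m ∧ ¬ Contains G H}

/-- The parameter `h(n, G)`. -/
noncomputable def hNum (n : ℕ) (G : SimpleGraph V) : ℕ :=
  sSup {m | ∃ (H : SimpleGraph (Fin n)) (f : Sym2 (Fin n) → Sym2 (Fin n)),
    H.edgeSet.ncard = m ∧ IsEdgeMap H f ∧ NoFreeCopy G H f}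

/-- Independence number. -/
noncomputable def indepNum (G : SimpleGraph V) [Fintype V] : ℕ :=
  sSup {m | ∃ s : Finset V, (∀ v ∈ s, ∀ w ∈ s, ¬ G.Adj v w) ∧ s.card = m}

/-- The matching `tK₂` on `Fin (2t)`: vertices `2i, 2i+1` are matched. -/
def matching (t : ℕ) : SimpleGraph (Fin (2*t)) :=
  SimpleGraph.fromRel (fun v w => (v : ℕ) / 2 = (w : ℕ) / 2)

/-- The star `K_{1,r}` on `Fin (r+1)`, with center `0`. -/
def starG (r : ℕ) : SimpleGraph (Fin (r+1)) :=
  SimpleGraph.fromRel (fun v _ => v = 0)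

/-- The disjoint union of `t-1` stars, each with `3(r-1)` edges, on
`Fin ((t-1)*(3r-2))`; the center of each block of `3r-2` consecutive vertices is
the first vertex of the block. -/
def starForest (t r : ℕ) : SimpleGraph (Fin ((t-1)*(3*r-2))) :=
  SimpleGraph.fromRel
    (fun v w => (v : ℕ)/(3*r-2) = (w : ℕ)/(3*r-2) ∧ (v : ℕ) % (3*r-2) = 0)

/-- Turán number for a family of two graphs. -/
noncomputable def exNum2 {V W : Type*} (n : ℕ) (G₁ : SimpleGraph V)
    (G₂ : SimpleGraph W) : ℕ :=
  sSup {m | ∃ H : SimpleGraph (Fin n),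
    H.edgeSet.ncard = m ∧ ¬ Contains G₁ H ∧ ¬ Contains G₂ H}

/-- `h` for a family of two graphs. -/
noncomputable def hNum2 {V W : Type*} (n : ℕ) (G₁ : SimpleGraph V)
    (G₂ : SimpleGraph W) : ℕ :=
  sSup {m | ∃ (H : SimpleGraph (Fin n)) (f : Sym2 (Fin n) → Sym2 (Fin n)),
    H.edgeSet.ncard = m ∧ IsEdgeMap H f ∧ NoFreeCopy G₁ H f ∧ NoFreeCopy G₂ H f}

/-! ### Auxiliary development -/

section Aux

/-- successor of a leaf position inside its triple -/
def nxt (p : ℕ) : ℕ := 3*((p-1)/3) + ((p-1)%3+1)%3 + 1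

lemma nxt_mem {r p : ℕ} (hr : 2 ≤ r) (h1 : 1 ≤ p) (h2 : p ≤ 3*(r-1)) :
    1 ≤ nxt p ∧ nxt p ≤ 3*(r-1) ∧ nxt p ≠ p ∧ (nxt p - 1)/3 = (p-1)/3 := by
  unfold nxt; omega

lemma nxt_cyc {p p' : ℕ} (h1 : 1 ≤ p) (h1' : 1 ≤ p') (hne : p ≠ p')
    (htriple : (p-1)/3 = (p'-1)/3) : nxt p = p' ∨ nxt p' = p := by
  unfold nxt; omega

/-- the leaf-shift map on the vertices of the star forest -/
def sigma' (t r : ℕ) : Fin ((t-1)*(3*r-2)) → Fin ((t-1)*(3*r-2)) := fun v =>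
  if h : (v : ℕ) % (3*r-2) ≠ 0 ∧
      (v : ℕ)/(3*r-2)*(3*r-2) + nxt ((v : ℕ) % (3*r-2)) < (t-1)*(3*r-2) then
    ⟨(v : ℕ)/(3*r-2)*(3*r-2) + nxt ((v : ℕ) % (3*r-2)), h.2⟩
  else v

lemma sigma'_center {t r : ℕ} (v : Fin ((t-1)*(3*r-2))) (h : (v : ℕ) % (3*r-2) = 0) :
    sigma' t r v = v := by
  unfold sigma'; rw [dif_neg]; simp [h]

lemma sigma'_leaf {t r : ℕ} (hr : 2 ≤ r) (v : Fin ((t-1)*(3*r-2)))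
    (h : (v : ℕ) % (3*r-2) ≠ 0) :
    (sigma' t r v : ℕ) = (v : ℕ)/(3*r-2)*(3*r-2) + nxt ((v : ℕ) % (3*r-2)) := by
  have hq : 0 < 3*r-2 := by omega
  have hp1 : 1 ≤ (v : ℕ) % (3*r-2) := by omega
  have hp2 : (v : ℕ) % (3*r-2) ≤ 3*(r-1) := by
    have := Nat.mod_lt (v : ℕ) hq; omega
  obtain ⟨hn1, hn2, -, -⟩ := nxt_mem hr hp1 hp2
  have hdiv : (v : ℕ)/(3*r-2) < t-1 := by
    rw [Nat.div_lt_iff_lt_mul hq]; exact v.isLt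
  have hmul : (v : ℕ)/(3*r-2)*(3*r-2) + (3*r-2) ≤ (t-1)*(3*r-2) := by
    calc (v : ℕ)/(3*r-2)*(3*r-2) + (3*r-2) = ((v : ℕ)/(3*r-2)+1)*(3*r-2) := by ring
      _ ≤ (t-1)*(3*r-2) := Nat.mul_le_mul_right _ hdiv
  have hbound : (v : ℕ)/(3*r-2)*(3*r-2) + nxt ((v : ℕ) % (3*r-2)) < (t-1)*(3*r-2) := by
    omega
  unfold sigma'; rw [dif_pos ⟨h, hbound⟩]

lemma sf_adj {t r : ℕ} (v w : Fin ((t-1)*(3*r-2))) :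
    (starForest t r).Adj v w ↔ v ≠ w ∧ (v : ℕ)/(3*r-2) = (w : ℕ)/(3*r-2) ∧
      ((v : ℕ) % (3*r-2) = 0 ∨ (w : ℕ) % (3*r-2) = 0) := by
  rw [starForest, fromRel_adj]
  constructor
  · rintro ⟨h1, ⟨ha, hb⟩ | ⟨ha, hb⟩⟩
    · exact ⟨h1, ha, Or.inl hb⟩
    · exact ⟨h1, ha.symm, Or.inr hb⟩
  · rintro ⟨h1, ha, hb | hb⟩
    · exact ⟨h1, Or.inl ⟨ha, hb⟩⟩
    · exact ⟨h1, Or.inr ⟨ha.symm, hb⟩⟩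

lemma star_adj {r : ℕ} (v w : Fin (r+1)) :
    (starG r).Adj v w ↔ v ≠ w ∧ (v = 0 ∨ w = 0) := by
  rw [starG, fromRel_adj]

lemma matching_adj {t : ℕ} (v w : Fin (2*t)) :
    (matching t).Adj v w ↔ v ≠ w ∧ (v : ℕ)/2 = (w : ℕ)/2 := by
  rw [matching, fromRel_adj]
  constructor
  · rintro ⟨h1, h2 | h2⟩
    · exact ⟨h1, h2⟩
    · exact ⟨h1, h2.symm⟩
  · rintro ⟨h1, h2⟩; exact ⟨h1, Or.inl h2⟩

/-- decomposition of an edge of the star forest into center and leaf -/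
lemma sf_edge_decomp {t r : ℕ} {e : Sym2 (Fin ((t-1)*(3*r-2)))}
    (he : e ∈ (starForest t r).edgeSet) :
    ∃ c l : Fin ((t-1)*(3*r-2)), e = s(c, l) ∧ (c : ℕ) % (3*r-2) = 0 ∧
      (l : ℕ) % (3*r-2) ≠ 0 ∧ (c : ℕ)/(3*r-2) = (l : ℕ)/(3*r-2) := by
  induction e using Sym2.ind with
  | _ v w =>
    rw [SimpleGraph.mem_edgeSet, sf_adj] at he
    obtain ⟨hne, hdiv, hc | hc⟩ := he
    · refine ⟨v, w, rfl, hc, ?_, hdiv⟩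
      intro hw
      apply hne
      apply Fin.ext
      have h1 := Nat.div_add_mod (v : ℕ) (3*r-2)
      have h2 := Nat.div_add_mod (w : ℕ) (3*r-2)
      rw [hdiv] at h1
      omega
    · refine ⟨w, v, Sym2.eq_swap, hc, ?_, hdiv.symm⟩
      intro hv
      apply hne
      apply Fin.ext
      have h1 := Nat.div_add_mod (v : ℕ) (3*r-2)
      have h2 := Nat.div_add_mod (w : ℕ) (3*r-2)
      rw [hdiv] at h1
      omega

/-- the edge mapping on the star forest -/
def f₀ (t r : ℕ) : Sym2 (Fin ((t-1)*(3*r-2))) → Sym2 (Fin ((t-1)*(3*r-2))) :=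
  Sym2.map (sigma' t r)

lemma leaf_facts {t r : ℕ} (hr : 2 ≤ r) (l : Fin ((t-1)*(3*r-2)))
    (h : (l : ℕ) % (3*r-2) ≠ 0) :
    (sigma' t r l : ℕ) % (3*r-2) = nxt ((l : ℕ) % (3*r-2)) ∧
    (sigma' t r l : ℕ) / (3*r-2) = (l : ℕ) / (3*r-2) ∧
    sigma' t r l ≠ l := by
  have hq : 0 < 3*r-2 := by omega
  have hp1 : 1 ≤ (l : ℕ) % (3*r-2) := by omega
  have hp2 : (l : ℕ) % (3*r-2) ≤ 3*(r-1) := by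
    have := Nat.mod_lt (l : ℕ) hq; omega
  obtain ⟨hn1, hn2, hne, -⟩ := nxt_mem hr hp1 hp2
  have hval := sigma'_leaf hr l h
  have hmod : (sigma' t r l : ℕ) % (3*r-2) = nxt ((l : ℕ) % (3*r-2)) := by
    rw [hval, Nat.add_comm, Nat.add_mul_mod_self_right, Nat.mod_eq_of_lt (by omega)]
  have hdiv : (sigma' t r l : ℕ) / (3*r-2) = (l : ℕ) / (3*r-2) := by
    rw [hval, Nat.add_comm, Nat.add_mul_div_right _ _ hq,
      Nat.div_eq_of_lt (by omega), Nat.zero_add]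
  refine ⟨hmod, hdiv, fun heq => ?_⟩
  rw [heq] at hmod
  omega

lemma isEdgeMap_f₀ {t r : ℕ} (hr : 2 ≤ r) : IsEdgeMap (starForest t r) (f₀ t r) := by
  intro e he
  obtain ⟨c, l, rfl, hc, hl, hdiv⟩ := sf_edge_decomp he
  obtain ⟨hmod, hdiv', hne'⟩ := leaf_facts hr l hl
  have hmap : f₀ t r s(c, l) = s(c, sigma' t r l) := by
    rw [f₀, Sym2.map_pair_eq, sigma'_center c hc]
  have hq : 0 < 3*r-2 := by omega
  have hnxt1 : 1 ≤ nxt ((l : ℕ) % (3*r-2)) := by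
    have hp2 : (l : ℕ) % (3*r-2) ≤ 3*(r-1) := by
      have := Nat.mod_lt (l : ℕ) hq; omega
    exact (nxt_mem hr (by omega) hp2).1
  have hcl : c ≠ sigma' t r l := by
    intro heq
    have h2 : ((sigma' t r l : ℕ)) % (3*r-2) = 0 := by rw [← heq]; exact hc
    omega
  constructor
  · rw [hmap, SimpleGraph.mem_edgeSet, sf_adj]
    exact ⟨hcl, by rw [hdiv, hdiv'], Or.inl hc⟩
  · rw [hmap]
    intro heq
    rw [Sym2.eq_iff] at heq
    rcases heq with ⟨-, h2⟩ | ⟨h1, -⟩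
    · exact hne' h2
    · have hcontra : (c : ℕ) % (3*r-2) = (l : ℕ) % (3*r-2) := by rw [h1]
      omega

lemma noFreeStar {t r : ℕ} (hr : 2 ≤ r) :
    NoFreeCopy (starG r) (starForest t r) (f₀ t r) := by
  intro φ hφ hfree
  have hq : 0 < 3*r-2 := by omega
  -- two distinct non-zero vertices of the star
  have h10 : (⟨1, by omega⟩ : Fin (r+1)) ≠ 0 := by
    intro h; exact absurd (congrArg Fin.val h) (by simp)
  have h20 : (⟨2, by omega⟩ : Fin (r+1)) ≠ 0 := by
    intro h; exact absurd (congrArg Fin.val h) (by simp)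
  have hadj : ∀ i : Fin (r+1), i ≠ 0 → (starForest t r).Adj (φ 0) (φ i) := by
    intro i hi
    exact φ.map_adj ((star_adj 0 i).2 ⟨(Ne.symm hi), Or.inl rfl⟩)
  -- the image of the center must be a center
  have hcenter : (φ 0 : ℕ) % (3*r-2) = 0 := by
    by_contra hnc
    have key : ∀ i : Fin (r+1), i ≠ 0 →
        (φ i : ℕ) = (φ 0 : ℕ) / (3*r-2) * (3*r-2) := by
      intro i hi
      have h := (sf_adj _ _).1 (hadj i hi)
      obtain ⟨-, hdiv, hc | hc⟩ := h
      · exact absurd hc hnc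
      · have := Nat.div_add_mod (φ i : ℕ) (3*r-2)
        rw [← hdiv, Nat.mul_comm] at this
        omega
    have : φ ⟨1, by omega⟩ = φ ⟨2, by omega⟩ := by
      apply Fin.ext
      rw [key _ h10, key _ h20]
    have := hφ this
    exact absurd (congrArg Fin.val this) (by simp)
  -- all leaves live in the same block
  have hleaf : ∀ i : Fin (r+1), i ≠ 0 →
      (φ i : ℕ) % (3*r-2) ≠ 0 ∧ (φ i : ℕ) / (3*r-2) = (φ 0 : ℕ) / (3*r-2) := by
    intro i hi
    have h := (sf_adj _ _).1 (hadj i hi)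
    obtain ⟨hne, hdiv, hc⟩ := h
    refine ⟨fun hmod => ?_, hdiv.symm⟩
    apply hne
    apply Fin.ext
    have h1 := Nat.div_add_mod (φ 0 : ℕ) (3*r-2)
    have h2 := Nat.div_add_mod (φ i : ℕ) (3*r-2)
    rw [hdiv] at h1
    omega
  -- pigeonhole on triples
  have hmaps : ∀ i ∈ Finset.univ.erase (0 : Fin (r+1)),
      ((φ i : ℕ) % (3*r-2) - 1) / 3 ∈ Finset.range (r-1) := by
    intro i hi
    obtain ⟨hm, -⟩ := hleaf i (Finset.mem_erase.1 hi).1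
    have hlt := Nat.mod_lt (φ i : ℕ) hq
    simp only [Finset.mem_range]
    omega
  have hcard : (Finset.range (r-1)).card < (Finset.univ.erase (0 : Fin (r+1))).card := by
    rw [Finset.card_range, Finset.card_erase_of_mem (Finset.mem_univ _),
      Finset.card_univ, Fintype.card_fin]
    omega
  obtain ⟨i, hi, j, hj, hij, heq⟩ :=
    Finset.exists_ne_map_eq_of_card_lt_of_maps_to hcard hmaps
  have hi0 : i ≠ 0 := (Finset.mem_erase.1 hi).1
  have hj0 : j ≠ 0 := (Finset.mem_erase.1 hj).1
  obtain ⟨hmi, hdi⟩ := hleaf i hi0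
  obtain ⟨hmj, hdj⟩ := hleaf j hj0
  have hφij : φ i ≠ φ j := fun h => hij (hφ h)
  have hpne : (φ i : ℕ) % (3*r-2) ≠ (φ j : ℕ) % (3*r-2) := by
    intro h
    apply hφij
    apply Fin.ext
    have h1 := Nat.div_add_mod (φ i : ℕ) (3*r-2)
    have h2 := Nat.div_add_mod (φ j : ℕ) (3*r-2)
    rw [hdi] at h1; rw [hdj] at h2
    omega
  -- the two edges, one of which maps to the other
  have hcyc := nxt_cyc (p := (φ i : ℕ) % (3*r-2)) (p' := (φ j : ℕ) % (3*r-2))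
    (by omega) (by omega) hpne heq
  have hmem : ∀ k : Fin (r+1), k ≠ 0 →
      s(φ 0, φ k) ∈ copyEdges (starG r) (starForest t r) φ := by
    intro k hk
    exact ⟨s(0, k), (star_adj 0 k).2 ⟨Ne.symm hk, Or.inl rfl⟩, Sym2.map_pair_eq _ _ _⟩
  have hfval : ∀ k : Fin (r+1), k ≠ 0 → ∀ m : Fin (r+1), m ≠ 0 →
      nxt ((φ k : ℕ) % (3*r-2)) = (φ m : ℕ) % (3*r-2) → f₀ t r s(φ 0, φ k) = s(φ 0, φ m) := by
    intro k hk m hm hn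
    obtain ⟨hmk, hdk⟩ := hleaf k hk
    obtain ⟨hmm, hdm⟩ := hleaf m hm
    rw [f₀, Sym2.map_pair_eq, sigma'_center _ hcenter]
    have hkm : sigma' t r (φ k) = φ m := by
      apply Fin.ext
      rw [sigma'_leaf hr _ hmk]
      have h2 := Nat.div_add_mod (φ m : ℕ) (3*r-2)
      rw [hdm, ← hdk, Nat.mul_comm] at h2
      omega
    rw [hkm]
  rcases hcyc with h | h
  · exact hfree _ (hmem i hi0) (by rw [hfval i hi0 j hj0 h]; exact hmem j hj0)
  · exact hfree _ (hmem j hj0) (by rw [hfval j hj0 i hi0 h]; exact hmem i hi0)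

lemma noMatching {t r : ℕ} (hr : 2 ≤ r) (ht : 1 ≤ t) :
    ¬ Contains (matching t) (starForest t r) := by
  rintro ⟨φ, hφ⟩
  have hq : 0 < 3*r-2 := by omega
  have pa : ∀ i : Fin t, (2*(i:ℕ) : ℕ) < 2*t := by intro i; have := i.isLt; omega
  have pb : ∀ i : Fin t, (2*(i:ℕ)+1 : ℕ) < 2*t := by intro i; have := i.isLt; omega
  set a : Fin t → Fin (2*t) := fun i => ⟨2*(i:ℕ), pa i⟩ with ha
  set b : Fin t → Fin (2*t) := fun i => ⟨2*(i:ℕ)+1, pb i⟩ with hb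
  have hadj : ∀ i : Fin t, (starForest t r).Adj (φ (a i)) (φ (b i)) := by
    intro i
    apply φ.map_adj
    rw [matching_adj]
    constructor
    · intro h; exact absurd (congrArg Fin.val h) (by simp [ha, hb])
    · simp only [ha, hb]; omega
  have hmaps : ∀ i ∈ (Finset.univ : Finset (Fin t)),
      (φ (a i) : ℕ) / (3*r-2) ∈ Finset.range (t-1) := by
    intro i _
    rw [Finset.mem_range, Nat.div_lt_iff_lt_mul hq]
    exact (φ (a i)).isLt
  have hcard : (Finset.range (t-1)).card < (Finset.univ : Finset (Fin t)).card := by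
    rw [Finset.card_range, Finset.card_univ, Fintype.card_fin]; omega
  obtain ⟨i, -, j, -, hij, heq⟩ :=
    Finset.exists_ne_map_eq_of_card_lt_of_maps_to hcard hmaps
  -- in each of the two pairs, one vertex is the center of the common block
  have key : ∀ k : Fin t, ∃ x : Fin (2*t), (x = a k ∨ x = b k) ∧
      (φ x : ℕ) = (φ (a k) : ℕ) / (3*r-2) * (3*r-2) := by
    intro k
    obtain ⟨-, hdiv, hc | hc⟩ := (sf_adj _ _).1 (hadj k)
    · refine ⟨a k, Or.inl rfl, ?_⟩
      have := Nat.div_add_mod (φ (a k) : ℕ) (3*r-2)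
      rw [Nat.mul_comm] at this
      omega
    · refine ⟨b k, Or.inr rfl, ?_⟩
      have := Nat.div_add_mod (φ (b k) : ℕ) (3*r-2)
      rw [← hdiv, Nat.mul_comm] at this
      omega
  obtain ⟨x, hx, hxv⟩ := key i
  obtain ⟨y, hy, hyv⟩ := key j
  have hxy : φ x = φ y := by
    apply Fin.ext
    rw [hxv, hyv, heq]
  have := hφ hxy
  have hvij : (i : ℕ) ≠ (j : ℕ) := fun h => hij (Fin.ext h)
  rcases hx with rfl | rfl <;> rcases hy with rfl | rfl <;>
    exact absurd (congrArg Fin.val this) (by simp [ha, hb]; omega)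

lemma card_sf {t r : ℕ} (hr : 2 ≤ r) :
    (starForest t r).edgeSet.ncard = 3*((r-1)*(t-1)) := by
  have hq : 0 < 3*r-2 := by omega
  have hctr : ∀ l : Fin ((t-1)*(3*r-2)), (l : ℕ)/(3*r-2)*(3*r-2) < (t-1)*(3*r-2) := by
    intro l
    calc (l : ℕ)/(3*r-2)*(3*r-2) ≤ (l : ℕ) := Nat.div_mul_le_self _ _
      _ < (t-1)*(3*r-2) := l.isLt
  set ctr : Fin ((t-1)*(3*r-2)) → Fin ((t-1)*(3*r-2)) :=
    fun l => ⟨(l : ℕ)/(3*r-2)*(3*r-2), hctr l⟩ with hctrdef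
  have hctrmod : ∀ l, ((ctr l : ℕ)) % (3*r-2) = 0 := by
    intro l; simp only [hctrdef]; exact Nat.mul_mod_left _ _
  have hctrdiv : ∀ l, ((ctr l : ℕ)) / (3*r-2) = (l : ℕ) / (3*r-2) := by
    intro l; simp only [hctrdef]; exact Nat.mul_div_cancel _ hq
  have hset : (starForest t r).edgeSet =
      (fun l => s(ctr l, l)) '' {l | (l : ℕ) % (3*r-2) ≠ 0} := by
    ext e
    constructor
    · intro he
      obtain ⟨c, l, rfl, hc, hl, hdiv⟩ := sf_edge_decomp he
      refine ⟨l, hl, ?_⟩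
      have : ctr l = c := by
        apply Fin.ext
        have h1 := Nat.div_add_mod (c : ℕ) (3*r-2)
        rw [hdiv, Nat.mul_comm] at h1
        simp only [hctrdef]
        omega
      show s(ctr l, l) = s(c, l)
      rw [this]
    · rintro ⟨l, hl, rfl⟩
      rw [SimpleGraph.mem_edgeSet, sf_adj]
      refine ⟨?_, hctrdiv l, Or.inl (hctrmod l)⟩
      intro h
      have := congrArg (fun x : Fin ((t-1)*(3*r-2)) => (x : ℕ) % (3*r-2)) h
      simp only [hctrmod l] at this
      exact hl this.symm
  have hinj : Set.InjOn (fun l => s(ctr l, l)) {l | (l : ℕ) % (3*r-2) ≠ 0} := by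
    intro l1 h1 l2 h2 heq
    simp only at heq
    rw [Sym2.eq_iff] at heq
    rcases heq with ⟨-, h⟩ | ⟨ha, hb⟩
    · exact h
    · exfalso; apply h2; rw [← ha]; exact hctrmod l1
  rw [hset, Set.ncard_image_of_injOn hinj]
  -- count the leaves
  have hfin : {l : Fin ((t-1)*(3*r-2)) | (l : ℕ) % (3*r-2) ≠ 0} =
      ↑(Finset.univ.filter (fun l : Fin ((t-1)*(3*r-2)) => (l : ℕ) % (3*r-2) ≠ 0)) := by
    ext l; simp
  rw [hfin, Set.ncard_coe_finset]
  have hsplit : (Finset.univ.filter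
        (fun l : Fin ((t-1)*(3*r-2)) => (l : ℕ) % (3*r-2) ≠ 0)).card
      = (t-1)*(3*r-2) - (Finset.univ.filter
        (fun l : Fin ((t-1)*(3*r-2)) => (l : ℕ) % (3*r-2) = 0)).card := by
    simp only [ne_eq]
    rw [Finset.filter_not, Finset.card_sdiff_of_subset (Finset.filter_subset _ _)]
    rw [Finset.card_univ, Fintype.card_fin]
  have hbl : ∀ b : Fin (t-1), (b : ℕ)*(3*r-2) < (t-1)*(3*r-2) :=
    fun b => (Nat.mul_lt_mul_right hq).2 b.isLt
  have hcenters : (Finset.univ.filter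
      (fun l : Fin ((t-1)*(3*r-2)) => (l : ℕ) % (3*r-2) = 0)).card = t-1 := by
    have himg : Finset.univ.filter
        (fun l : Fin ((t-1)*(3*r-2)) => (l : ℕ) % (3*r-2) = 0)
        = Finset.image (fun b : Fin (t-1) =>
            (⟨(b : ℕ)*(3*r-2), hbl b⟩ : Fin ((t-1)*(3*r-2)))) Finset.univ := by
      ext l
      simp only [Finset.mem_filter, Finset.mem_image, Finset.mem_univ, true_and]
      constructor
      · intro hm
        refine ⟨⟨(l : ℕ)/(3*r-2), by rw [Nat.div_lt_iff_lt_mul hq]; exact l.isLt⟩, ?_⟩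
        apply Fin.ext
        simp only
        have := Nat.div_add_mod (l : ℕ) (3*r-2)
        rw [Nat.mul_comm] at this
        omega
      · rintro ⟨b, rfl⟩
        exact Nat.mul_mod_left _ _
    have hinj2 : Function.Injective (fun b : Fin (t-1) =>
        (⟨(b : ℕ)*(3*r-2), hbl b⟩ : Fin ((t-1)*(3*r-2)))) := by
      intro a b h
      have := congrArg Fin.val h
      simp only at this
      exact Fin.ext (Nat.eq_of_mul_eq_mul_right hq this)
    rw [himg, Finset.card_image_of_injective _ hinj2, Finset.card_univ,
      Fintype.card_fin]
  have hcardu : (Finset.univ : Finset (Fin ((t-1)*(3*r-2)))).card = (t-1)*(3*r-2) := by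
    rw [Finset.card_univ, Fintype.card_fin]
  have harith : (t-1)*(3*r-2) = 3*((r-1)*(t-1)) + (t-1) := by
    have h3 : 3*r-2 = 3*(r-1)+1 := by omega
    rw [h3, Nat.mul_add, Nat.mul_one]
    ring_nf
  omega

/-- Alon–Caro: a fixed-point-free self-map of a finite set admits an
independent ("free") subset of proportion at least one third. -/
lemma freeSubset {α : Type*} [DecidableEq α] (f : α → α) (E : Finset α)
    (hf : ∀ e ∈ E, f e ≠ e) :
    ∃ S : Finset α, S ⊆ E ∧ (∀ e ∈ S, f e ∉ S) ∧ E.card ≤ 3 * S.card := by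
  induction E using Finset.strongInduction with
  | _ E ih =>
    rcases E.eq_empty_or_nonempty with rfl | hne
    · exact ⟨∅, by simp⟩
    have hex : ∃ e₀ ∈ E, (E.filter (fun e => f e = e₀)).card ≤ 1 := by
      by_contra hcon
      push_neg at hcon
      have hsum : (∑ b ∈ E, ((E.filter (fun e => f e ∈ E)).filter
          (fun e => f e = b)).card) = (E.filter (fun e => f e ∈ E)).card :=
        (Finset.card_eq_sum_card_fiberwise
          (fun x hx => (Finset.mem_filter.1 hx).2)).symm
      have hfib : ∀ b ∈ E, ((E.filter (fun e => f e ∈ E)).filter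
          (fun e => f e = b)).card = (E.filter (fun e => f e = b)).card := by
        intro b hb
        congr 1
        rw [Finset.filter_filter]
        apply Finset.filter_congr
        intro x hx
        constructor
        · rintro ⟨-, h⟩; exact h
        · intro h; exact ⟨by rw [h]; exact hb, h⟩
      have hge : 2 * E.card ≤ ∑ b ∈ E, (E.filter (fun e => f e = b)).card := by
        calc 2 * E.card = ∑ _b ∈ E, 2 := by
              rw [Finset.sum_const, smul_eq_mul]; ring
          _ ≤ _ := Finset.sum_le_sum (fun b hb => hcon b hb)
      have hle : ∑ b ∈ E, (E.filter (fun e => f e = b)).card ≤ E.card := by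
        calc ∑ b ∈ E, (E.filter (fun e => f e = b)).card
            = ∑ b ∈ E, ((E.filter (fun e => f e ∈ E)).filter
                (fun e => f e = b)).card := by
              exact Finset.sum_congr rfl (fun b hb => (hfib b hb).symm)
          _ = (E.filter (fun e => f e ∈ E)).card := hsum
          _ ≤ E.card := Finset.card_filter_le _ _
      have : 0 < E.card := Finset.card_pos.2 hne
      omega
    obtain ⟨e₀, he₀, hcard1⟩ := hex
    set T : Finset α := insert e₀ (insert (f e₀) (E.filter (fun e => f e = e₀)))
      with hT
    have hTcard : T.card ≤ 3 := by
      calc T.card ≤ (insert (f e₀) (E.filter (fun e => f e = e₀))).card + 1 :=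
            Finset.card_insert_le _ _
        _ ≤ ((E.filter (fun e => f e = e₀)).card + 1) + 1 := by
            have := Finset.card_insert_le (f e₀) (E.filter (fun e => f e = e₀))
            omega
        _ ≤ 3 := by omega
    have hssub : E \ T ⊂ E := by
      refine Finset.ssubset_iff_of_subset (Finset.sdiff_subset) |>.2 ?_
      exact ⟨e₀, he₀, by simp [hT]⟩
    obtain ⟨S', hS'sub, hS'free, hS'card⟩ := ih (E \ T) hssub
      (fun e he => hf e (Finset.mem_sdiff.1 he).1)
    have he₀S' : e₀ ∉ S' := by
      intro h
      have := hS'sub h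
      rw [Finset.mem_sdiff] at this
      exact this.2 (by simp [hT])
    refine ⟨insert e₀ S', ?_, ?_, ?_⟩
    · intro x hx
      rcases Finset.mem_insert.1 hx with rfl | hx
      · exact he₀
      · exact (Finset.mem_sdiff.1 (hS'sub hx)).1
    · intro e he
      rcases Finset.mem_insert.1 he with heq | he
      · intro hcon
        rw [heq] at hcon
        rcases Finset.mem_insert.1 hcon with h | h
        · exact hf e₀ he₀ h
        · have := hS'sub h
          rw [Finset.mem_sdiff] at this
          exact this.2 (by simp [hT])
      · intro hcon
        rcases Finset.mem_insert.1 hcon with h | h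
        · have hmem := hS'sub he
          rw [Finset.mem_sdiff] at hmem
          apply hmem.2
          rw [hT]
          apply Finset.mem_insert_of_mem
          apply Finset.mem_insert_of_mem
          rw [Finset.mem_filter]
          exact ⟨hmem.1, h⟩
        · exact hS'free e he h
    · have h1 : E.card ≤ (E \ T).card + T.card :=
        Finset.card_le_card_sdiff_add_card
      rw [Finset.card_insert_of_notMem he₀S']
      omega

lemma edgeSet_map' {U : Type*} (G : SimpleGraph U) (ι : U ↪ W) :
    (G.map ι).edgeSet = Sym2.map ι '' G.edgeSet := by
  ext e
  constructor
  · intro h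
    induction e using Sym2.ind with
    | _ x y =>
      rw [SimpleGraph.mem_edgeSet, SimpleGraph.map_adj] at h
      obtain ⟨a, b, hab, ha, hb⟩ := h
      exact ⟨s(a, b), hab, by rw [Sym2.map_pair_eq, ha, hb]⟩
  · rintro ⟨e₀, he₀, rfl⟩
    induction e₀ using Sym2.ind with
    | _ a b =>
      rw [Sym2.map_pair_eq, SimpleGraph.mem_edgeSet, SimpleGraph.map_adj]
      exact ⟨a, b, he₀, rfl, rfl⟩

lemma transport {U : Type*} (G : SimpleGraph V) (hG : ∀ v, ∃ w, G.Adj v w)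
    (G₀ : SimpleGraph U) (ι : U ↪ W) (φ : G →g G₀.map ι)
    (hφ : Function.Injective φ) :
    ∃ ψ : G →g G₀, Function.Injective ψ ∧ ∀ v, ι (ψ v) = φ v := by
  have pre : ∀ v, ∃ a, ι a = φ v := by
    intro v
    obtain ⟨w, hw⟩ := hG v
    have h := φ.map_adj hw
    rw [SimpleGraph.map_adj] at h
    obtain ⟨a, b, -, ha, -⟩ := h
    exact ⟨a, ha⟩
  choose ψf hψ using pre
  have hadj : ∀ {v w}, G.Adj v w → G₀.Adj (ψf v) (ψf w) := by
    intro v w hvw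
    have h := φ.map_adj hvw
    rw [SimpleGraph.map_adj] at h
    obtain ⟨a, b, hab, ha, hb⟩ := h
    have h1 : ψf v = a := ι.injective (by rw [hψ, ha])
    have h2 : ψf w = b := ι.injective (by rw [hψ, hb])
    rw [h1, h2]; exact hab
  refine ⟨⟨ψf, hadj⟩, ?_, hψ⟩
  intro v w h
  apply hφ
  have h' : ψf v = ψf w := h
  rw [← hψ, ← hψ, h']

lemma copyEdges_comp {U : Type*} (G : SimpleGraph V) (G₀ : SimpleGraph U)
    (ι : U ↪ W) (φ : G →g G₀.map ι) (ψ : G →g G₀) (hc : ∀ v, ι (ψ v) = φ v) :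
    copyEdges G (G₀.map ι) φ = Sym2.map ι '' copyEdges G G₀ ψ := by
  rw [copyEdges, copyEdges, ← Set.image_comp]
  have : Sym2.map ⇑φ = Sym2.map ι ∘ Sym2.map ⇑ψ := by
    funext e
    induction e using Sym2.ind with
    | _ x y =>
      rw [Function.comp_apply, Sym2.map_pair_eq, Sym2.map_pair_eq,
        Sym2.map_pair_eq, hc, hc]
  rw [this]

/-- No copy of `G` inside the subgraph spanned by an `f`-free edge set. -/
lemma no_contains_of_free {n : ℕ} (H : SimpleGraph (Fin n))
    (f : Sym2 (Fin n) → Sym2 (Fin n)) (S : Finset (Sym2 (Fin n)))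
    (hSedge : (↑S : Set (Sym2 (Fin n))) ⊆ H.edgeSet)
    (hSfree : ∀ e ∈ S, f e ∉ S)
    (G : SimpleGraph V) (hnf : NoFreeCopy G H f) :
    ¬ Contains G (SimpleGraph.fromEdgeSet (↑S : Set (Sym2 (Fin n)))) := by
  rintro ⟨φ, hφ⟩
  have hle : SimpleGraph.fromEdgeSet (↑S : Set (Sym2 (Fin n))) ≤ H := by
    intro v w hvw
    rw [SimpleGraph.fromEdgeSet_adj] at hvw
    have := hSedge hvw.1
    rwa [SimpleGraph.mem_edgeSet] at this
  set φ' : G →g H := (SimpleGraph.Hom.ofLE hle).comp φ with hφ'def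
  have hcoe : ∀ v, φ' v = φ v := fun v => rfl
  have hφ' : Function.Injective φ' := by
    intro a b h
    apply hφ
    rw [← hcoe, ← hcoe, h]
  have hsub : copyEdges G H φ' ⊆ (↑S : Set (Sym2 (Fin n))) := by
    rintro e ⟨e₀, he₀, rfl⟩
    induction e₀ using Sym2.ind with
    | _ a b =>
      have hadj : (SimpleGraph.fromEdgeSet (↑S : Set (Sym2 (Fin n)))).Adj (φ a) (φ b) :=
        φ.map_adj he₀
      rw [SimpleGraph.fromEdgeSet_adj] at hadj
      rw [Sym2.map_pair_eq]
      have : φ' a = φ a := rfl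
      rw [this]
      have : φ' b = φ b := rfl
      rw [this]
      exact hadj.1
  apply hnf φ' hφ'
  intro e he hfe
  exact hSfree e (hsub he) (hsub hfe)

end Aux

/-- the disjoint union of t-1 stars K_{1,3(r-1)} admits an edge mapping
with no f-free K_{1,r}, contains no tK₂; consequently, if r ≥ 2t+1 and
ex(n,{K_{1,r},tK₂}) = (r-1)(t-1), then h(n,{K_{1,r},tK₂}) = 3(r-1)(t-1) for
n ≥ (t-1)(3r-2). -/
theorem stmt16 (r t : ℕ) (hr : 2 ≤ r) (ht : 1 ≤ t) :
    (∃ f, IsEdgeMap (starForest t r) f ∧ NoFreeCopy (starG r) (starForest t r) f) ∧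
    ¬ Contains (matching t) (starForest t r) ∧
    (2*t+1 ≤ r → ∀ n, (t-1)*(3*r-2) ≤ n →
      exNum2 n (starG r) (matching t) = (r-1)*(t-1) →
      hNum2 n (starG r) (matching t) = 3*((r-1)*(t-1))) := by
  classical
  refine ⟨⟨f₀ t r, isEdgeMap_f₀ hr, noFreeStar hr⟩, noMatching hr ht, ?_⟩
  intro _hrt n hn hex
  -- the defining sets
  set exSet : Set ℕ := {m | ∃ H : SimpleGraph (Fin n),
    H.edgeSet.ncard = m ∧ ¬ Contains (starG r) H ∧ ¬ Contains (matching t) H}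
    with hexSet
  set hSet : Set ℕ := {m | ∃ (H : SimpleGraph (Fin n))
      (f : Sym2 (Fin n) → Sym2 (Fin n)),
    H.edgeSet.ncard = m ∧ IsEdgeMap H f ∧ NoFreeCopy (starG r) H f ∧
      NoFreeCopy (matching t) H f} with hhSet
  have hbound : ∀ (s : Set (Sym2 (Fin n))), s.ncard ≤ Nat.card (Sym2 (Fin n)) := by
    intro s
    have := Set.ncard_le_ncard (Set.subset_univ s) Set.finite_univ
    rwa [Set.ncard_univ] at this
  have hbddE : BddAbove exSet := by
    refine ⟨Nat.card (Sym2 (Fin n)), ?_⟩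
    rintro m ⟨H, hm, -, -⟩
    rw [← hm]; exact hbound _
  have hbddH : BddAbove hSet := by
    refine ⟨Nat.card (Sym2 (Fin n)), ?_⟩
    rintro m ⟨H, f, hm, -⟩
    rw [← hm]; exact hbound _
  -- upper bound for every member of hSet
  have hub : ∀ m ∈ hSet, m ≤ 3*((r-1)*(t-1)) := by
    rintro m ⟨H, f, hm, hmap, hnf1, hnf2⟩
    have hEfin : H.edgeSet.Finite := Set.toFinite _
    have hfne : ∀ e ∈ hEfin.toFinset, f e ≠ e := by
      intro e he
      exact (hmap e (hEfin.mem_toFinset.1 he)).2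
    obtain ⟨S, hSsub, hSfree, hScard⟩ := freeSubset f hEfin.toFinset hfne
    have hSedge : (↑S : Set (Sym2 (Fin n))) ⊆ H.edgeSet := by
      intro e he
      exact hEfin.mem_toFinset.1 (hSsub he)
    have hnc1 := no_contains_of_free H f S hSedge hSfree (starG r) hnf1
    have hnc2 := no_contains_of_free H f S hSedge hSfree (matching t) hnf2
    have hcardS : (SimpleGraph.fromEdgeSet
        (↑S : Set (Sym2 (Fin n)))).edgeSet.ncard = S.card := by
      rw [SimpleGraph.edgeSet_fromEdgeSet]
      rw [sdiff_eq_left.2 ?_, Set.ncard_coe_finset]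
      rw [Set.disjoint_left]
      intro e he hdiag
      exact (SimpleGraph.not_isDiag_of_mem_edgeSet H (hSedge he)) hdiag
    have hmemE : S.card ∈ exSet := ⟨_, hcardS, hnc1, hnc2⟩
    have hSle : S.card ≤ (r-1)*(t-1) := by
      have h1 := le_csSup hbddE hmemE
      have h2 : sSup exSet = exNum2 n (starG r) (matching t) := rfl
      rw [hexSet] at h2
      rw [h2, hex] at h1
      exact h1
    have hmE : m = hEfin.toFinset.card := by
      rw [← hm, Set.ncard_eq_toFinset_card _ hEfin]
    omega
  -- lower bound: the construction
  set ι : Fin ((t-1)*(3*r-2)) ↪ Fin n := Fin.castLEEmb hn with hι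
  have hSym2ι : Function.Injective (Sym2.map ι) := Sym2.map.injective ι.injective
  set H₀ : SimpleGraph (Fin n) := (starForest t r).map ι with hH₀
  set f' : Sym2 (Fin n) → Sym2 (Fin n) := fun e =>
    if h : ∃ e₀, Sym2.map ι e₀ = e then Sym2.map ι (f₀ t r h.choose) else e
    with hf'
  have hf'x : ∀ e₀, f' (Sym2.map ι e₀) = Sym2.map ι (f₀ t r e₀) := by
    intro e₀
    have hex' : ∃ x, Sym2.map ι x = Sym2.map ι e₀ := ⟨e₀, rfl⟩
    rw [hf']
    simp only
    rw [dif_pos hex', hSym2ι hex'.choose_spec]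
  have hedge₀ : H₀.edgeSet = Sym2.map ι '' (starForest t r).edgeSet :=
    edgeSet_map' _ _
  have hmape : IsEdgeMap H₀ f' := by
    intro e he
    rw [hedge₀] at he
    obtain ⟨e₀, he₀, rfl⟩ := he
    obtain ⟨h1, h2⟩ := isEdgeMap_f₀ hr e₀ he₀
    rw [hf'x]
    exact ⟨by rw [hedge₀]; exact ⟨_, h1, rfl⟩, fun hcon => h2 (hSym2ι hcon)⟩
  have hstar_deg : ∀ v : Fin (r+1), ∃ w, (starG r).Adj v w := by
    intro v
    by_cases hv : v = 0
    · refine ⟨⟨1, by omega⟩, (star_adj _ _).2 ⟨?_, Or.inl hv⟩⟩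
      intro h
      rw [hv] at h
      exact absurd (congrArg Fin.val h) (by simp)
    · exact ⟨0, (star_adj _ _).2 ⟨hv, Or.inr rfl⟩⟩
  have hmatch_deg : ∀ v : Fin (2*t), ∃ w, (matching t).Adj v w := by
    intro v
    by_cases hv : (v : ℕ) % 2 = 0
    · have hlt : (v : ℕ) + 1 < 2*t := by have := v.isLt; omega
      refine ⟨⟨(v : ℕ)+1, hlt⟩, (matching_adj _ _).2 ⟨?_, by simp only; omega⟩⟩
      intro h
      exact absurd (congrArg Fin.val h) (by simp)
    · have hpos : 1 ≤ (v : ℕ) := by omega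
      have hlt : (v : ℕ) - 1 < 2*t := by have := v.isLt; omega
      refine ⟨⟨(v : ℕ)-1, hlt⟩, (matching_adj _ _).2 ⟨?_, by simp only; omega⟩⟩
      intro h
      have := congrArg Fin.val h
      simp only at this
      omega
  have hnf1' : NoFreeCopy (starG r) H₀ f' := by
    intro φ hφ hfree
    obtain ⟨ψ, hψinj, hψcomm⟩ := transport (starG r) hstar_deg _ ι φ hφ
    apply noFreeStar hr ψ hψinj
    intro e₀ he₀ hcon
    have him := copyEdges_comp (starG r) (starForest t r) ι φ ψ hψcomm
    apply hfree (Sym2.map ι e₀) (by rw [him]; exact ⟨e₀, he₀, rfl⟩)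
    rw [hf'x, him]
    exact ⟨f₀ t r e₀, hcon, rfl⟩
  have hnf2' : NoFreeCopy (matching t) H₀ f' := by
    intro φ hφ _hfree
    obtain ⟨ψ, hψinj, -⟩ := transport (matching t) hmatch_deg _ ι φ hφ
    exact noMatching hr ht ⟨ψ, hψinj⟩
  have hcard₀ : H₀.edgeSet.ncard = 3*((r-1)*(t-1)) := by
    rw [hedge₀, Set.ncard_image_of_injective _ hSym2ι, card_sf hr]
  have hmemh : 3*((r-1)*(t-1)) ∈ hSet := ⟨H₀, f', hcard₀, hmape, hnf1', hnf2'⟩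
  show sSup hSet = 3*((r-1)*(t-1))
  exact le_antisymm (csSup_le ⟨_, hmemh⟩ hub) (le_csSup hbddH hmemh)
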